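/- Let X be a binomial random variable with t trials and success probability 1/2. For every ε ∈ (0, 1/2] with ε²t ≥ 6, it holds that Pr[X ≥ (t/2)(1+ε)] ≥ exp(−9ε²t/2). -/

import Mathlib

open MeasureTheory Real

private lemma sixteen_pow_le (n : ℕ) (hn : 1 ≤ n) :
    (16 : ℝ) ^ n ≤ 4 * n * (Nat.centralBinom n : ℝ) ^ 2 := by
  induction n with
  | zero => omega
  | succ n ih =>
    rcases Nat.eq_or_lt_of_le hn with h1 | h1
    · simp [← h1, Nat.centralBinom]
      norm_num [Nat.choose]
    · have hn1 : 1 ≤ n := by omega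
      have IH := ih hn1
      have key : ((n : ℝ) + 1) * (Nat.centralBinom (n + 1) : ℝ)
          = 2 * (2 * n + 1) * (Nat.centralBinom n : ℝ) := by
        have := Nat.succ_mul_centralBinom_succ n
        exact_mod_cast congrArg (Nat.cast : ℕ → ℝ) this
      have hpos : (0:ℝ) < (n:ℝ) + 1 := by positivity
      have h3 : (16 : ℝ) ^ (n+1) * ((n:ℝ)+1) ≤ 4 * (((n:ℝ)+1) * (Nat.centralBinom (n+1) : ℝ))^2 := by
        rw [key]
        have hcn : (0:ℝ) ≤ (Nat.centralBinom n : ℝ)^2 := sq_nonneg _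
        calc (16 : ℝ) ^ (n+1) * ((n:ℝ)+1) = 16 * ((n:ℝ)+1) * 16^n := by ring
          _ ≤ 16 * ((n:ℝ)+1) * (4 * n * (Nat.centralBinom n : ℝ) ^ 2) := by
              apply mul_le_mul_of_nonneg_left IH; positivity
          _ ≤ 4 * (2 * (2*(n:ℝ)+1) * (Nat.centralBinom n : ℝ))^2 := by nlinarith [hcn]
      have h4 : (16 : ℝ) ^ (n+1) * ((n:ℝ)+1)
          ≤ (4 * ((n:ℝ)+1) * (Nat.centralBinom (n+1) : ℝ)^2) * ((n:ℝ)+1) := by nlinarith [h3]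
      have := le_of_mul_le_mul_right h4 hpos
      push_cast
      linarith


private lemma cb_lower (n : ℕ) (hn : 1 ≤ n) :
    (4:ℝ)^n / (2 * Real.sqrt n) ≤ (Nat.centralBinom n : ℝ) := by
  have hn0 : (0:ℝ) < n := by exact_mod_cast hn
  have hs : (0:ℝ) < Real.sqrt n := Real.sqrt_pos.2 hn0
  have hC : (0:ℝ) ≤ (Nat.centralBinom n : ℝ) := Nat.cast_nonneg _
  have hA := sixteen_pow_le n hn
  have hsq : ((4:ℝ)^n / (2 * Real.sqrt n))^2 ≤ (Nat.centralBinom n : ℝ)^2 := by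
    have h1 : ((4:ℝ)^n / (2 * Real.sqrt n))^2 = (16:ℝ)^n / (4 * n) := by
      have h44 : ((4:ℝ)^n)^2 = 16^n := by
        rw [← pow_mul, pow_mul']; norm_num
      rw [div_pow, mul_pow, Real.sq_sqrt hn0.le, h44]
      norm_num
    rw [h1, div_le_iff₀ (by positivity)]
    nlinarith [hA]
  have := Real.sqrt_le_sqrt hsq
  rwa [Real.sqrt_sq (by positivity), Real.sqrt_sq hC] at this

private lemma center_bound (t : ℕ) (ht : 2 ≤ t) :
    1 / (4 * Real.sqrt t) ≤ (t.choose ((t+1)/2) : ℝ) / 2^t := by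
  have ht0 : (0:ℝ) < t := by exact_mod_cast (by omega : 0 < t)
  have hst : (0:ℝ) < Real.sqrt t := Real.sqrt_pos.2 ht0
  rcases Nat.even_or_odd t with ⟨n, hn⟩ | ⟨n, hn⟩
  · -- t = 2n
    have hn1 : 1 ≤ n := by omega
    have hidx : (t+1)/2 = n := by omega
    have hch : t.choose ((t+1)/2) = Nat.centralBinom n := by
      rw [hidx, Nat.centralBinom]; congr 1; omega
    have hlb := cb_lower n hn1
    have h2 : (2:ℝ)^t = 4^n := by
      rw [show t = 2*n by omega, pow_mul]; norm_num
    rw [hch, h2]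
    have hsn : (0:ℝ) < Real.sqrt n := Real.sqrt_pos.2 (by exact_mod_cast hn1)
    rw [div_le_div_iff₀ (by positivity) (by positivity)]
    have key : (4:ℝ)^n ≤ (Nat.centralBinom n : ℝ) * (2 * Real.sqrt n) := by
      rw [div_le_iff₀ (by positivity)] at hlb; linarith
    have hmono : Real.sqrt n ≤ Real.sqrt t := by
      apply Real.sqrt_le_sqrt; exact_mod_cast (by omega : n ≤ t)
    have hCpos : (0:ℝ) ≤ (Nat.centralBinom n : ℝ) := Nat.cast_nonneg _
    nlinarith [key, hmono, hCpos, hsn]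
  · -- t = 2n+1
    have hn1 : 1 ≤ n := by omega
    have hidx : (t+1)/2 = n + 1 := by omega
    have hge : (Nat.centralBinom n : ℝ) ≤ (t.choose ((t+1)/2) : ℝ) := by
      rw [hidx, show t = 2*n+1 by omega]
      have : (2*n+1).choose (n+1) = (2*n).choose n + (2*n).choose (n+1) :=
        Nat.choose_succ_succ' ..
      rw [Nat.centralBinom]
      exact_mod_cast Nat.le.intro this.symm
    have hlb := cb_lower n hn1
    have h2 : (2:ℝ)^t = 2 * 4^n := by
      rw [show t = 2*n+1 by omega, pow_succ', pow_mul]; norm_num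
    rw [h2]
    have hsn : (0:ℝ) < Real.sqrt n := Real.sqrt_pos.2 (by exact_mod_cast hn1)
    rw [div_le_div_iff₀ (by positivity) (by positivity)]
    have key : (4:ℝ)^n ≤ (Nat.centralBinom n : ℝ) * (2 * Real.sqrt n) := by
      rw [div_le_iff₀ (by positivity)] at hlb; linarith
    have hmono : Real.sqrt n ≤ Real.sqrt t := by
      apply Real.sqrt_le_sqrt; exact_mod_cast (by omega : n ≤ t)
    have hCpos : (0:ℝ) ≤ (Nat.centralBinom n : ℝ) := Nat.cast_nonneg _
    nlinarith [key, hmono, hCpos, hsn, hge, hst]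

private lemma choose_ratio (t c b : ℕ) (hc1 : t ≤ 2*c) (hc2 : 2*c ≤ t+1) (hb : b ≤ t) :
    ∀ d : ℕ, c + d ≤ b →
      (t.choose c : ℝ) * Real.exp (-((d:ℝ)*((d:ℝ)+1)) / ((t:ℝ) - b + 1)) ≤ (t.choose (c+d) : ℝ) := by
  have hbR : (b:ℝ) ≤ t := Nat.cast_le.2 hb
  have hD : (0:ℝ) < (t:ℝ) - b + 1 := by linarith
  intro d
  induction d with
  | zero => intro _; simp
  | succ d ih =>
    intro h
    have hIH := ih (by omega)
    have hcd_le : c + d + 1 ≤ t := by omega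
    have hcdb : ((c:ℝ) + d + 1) ≤ b := by exact_mod_cast Nat.cast_le.2 h
    have hTD : ((t:ℝ) - b + 1) ≤ (t:ℝ) - (c + d) := by
      push_cast; linarith
    have key : (t.choose (c+d+1) : ℝ) * ((c:ℝ)+d+1) = (t.choose (c+d) : ℝ) * ((t:ℝ) - ((c:ℝ)+d)) := by
      have h' := congrArg (Nat.cast : ℕ → ℝ) (Nat.choose_succ_right_eq t (c+d))
      push_cast [Nat.cast_sub (by omega : c + d ≤ t)] at h'
      convert h' using 2 <;> ring
    set D : ℝ := (t:ℝ) - b + 1 with hDdef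
    set u : ℝ := (2*(d:ℝ)+2) / D with hudef
    have hu : 0 ≤ u := by positivity
    have h1 : Real.exp (-u) * (1 + u) ≤ 1 := by
      rw [Real.exp_neg, inv_mul_le_iff₀ (Real.exp_pos u), mul_one]
      exact Real.add_one_le_exp u |>.trans_eq rfl |> fun h => by linarith [Real.add_one_le_exp u]
    have h2 : ((c:ℝ)+d+1) ≤ (1+u) * ((t:ℝ)-((c:ℝ)+d)) := by
      have huT : (2*(d:ℝ)+2) ≤ u * ((t:ℝ)-((c:ℝ)+d)) := by
        rw [hudef, div_mul_eq_mul_div, le_div_iff₀ hD]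
        have hTD' : D ≤ (t:ℝ) - ((c:ℝ)+d) := by push_cast at hTD ⊢; linarith
        nlinarith [hTD']
      have hc2R : (2:ℝ)*c ≤ (t:ℝ)+1 := by exact_mod_cast Nat.cast_le.2 hc2
      nlinarith [huT, hc2R]
    have hstep : Real.exp (-u) * ((c:ℝ)+d+1) ≤ (t:ℝ) - ((c:ℝ)+d) := by
      calc Real.exp (-u) * ((c:ℝ)+d+1)
          ≤ Real.exp (-u) * ((1+u) * ((t:ℝ)-((c:ℝ)+d))) :=
            mul_le_mul_of_nonneg_left h2 (Real.exp_pos _).le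
        _ = (Real.exp (-u) * (1+u)) * ((t:ℝ)-((c:ℝ)+d)) := by ring
        _ ≤ 1 * ((t:ℝ)-((c:ℝ)+d)) := by
            apply mul_le_mul_of_nonneg_right h1; linarith
        _ = (t:ℝ)-((c:ℝ)+d) := one_mul _
    have hexp : Real.exp (-(((d:ℝ)+1)*(((d:ℝ)+1)+1)) / D)
        = Real.exp (-((d:ℝ)*((d:ℝ)+1)) / D) * Real.exp (-u) := by
      rw [← Real.exp_add]
      congr 1
      rw [hudef]
      field_simp
      ring
    have hpos1 : (0:ℝ) < (c:ℝ)+d+1 := by positivity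
    have main : (t.choose c : ℝ) * Real.exp (-(((d:ℝ)+1)*(((d:ℝ)+1)+1)) / D) * ((c:ℝ)+d+1)
        ≤ (t.choose (c+d+1) : ℝ) * ((c:ℝ)+d+1) := by
      rw [key, hexp]
      calc (t.choose c : ℝ) * (Real.exp (-((d:ℝ)*((d:ℝ)+1)) / D) * Real.exp (-u)) * ((c:ℝ)+d+1)
          = ((t.choose c : ℝ) * Real.exp (-((d:ℝ)*((d:ℝ)+1)) / D)) * (Real.exp (-u) * ((c:ℝ)+d+1)) := by ring
        _ ≤ (t.choose (c+d) : ℝ) * ((t:ℝ)-((c:ℝ)+d)) := by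
            apply mul_le_mul hIH hstep (by positivity)
            exact Nat.cast_nonneg _
    have := le_of_mul_le_mul_right main hpos1
    push_cast
    convert this using 3 <;> push_cast <;> first | rfl | ring

set_option maxHeartbeats 2000000 in
theorem reverse_chernoff_upper_tail (t : ℕ) (ε : ℝ) (hε : 0 < ε) (hε2 : ε ≤ 1/2)
    (h6 : ε ^ 2 * t ≥ 6) :
    (PMF.binomial (1/2) (by norm_num) t).toMeasure
        {i : Fin (t + 1) | ((i : ℕ) : ℝ) ≥ (t / 2) * (1 + ε)} ≥
      ENNReal.ofReal (Real.exp (-(9 * ε ^ 2 * t) / 2)) := by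
  classical
  have htnn : (0:ℝ) ≤ t := Nat.cast_nonneg t
  have hε4 : ε^2 ≤ 1/4 := by nlinarith
  have htR : (24:ℝ) ≤ t := by nlinarith
  have htpos : (0:ℝ) < t := by linarith
  have ht24 : 24 ≤ t := by exact_mod_cast htR
  have hεt : (12:ℝ) ≤ ε * t := by nlinarith
  set c := (t+1)/2 with hcdef
  set a := ⌈(t:ℝ)/2 * (1+ε)⌉₊ with hadef
  set m := ⌊ε * t / 8⌋₊ with hmdef
  set b := a + m with hbdef
  have haR : (t:ℝ)/2 * (1+ε) ≤ a := Nat.le_ceil _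
  have haR' : (a:ℝ) ≤ (t:ℝ)/2 * (1+ε) + 1 := by
    have := Nat.ceil_lt_add_one (show (0:ℝ) ≤ (t:ℝ)/2 * (1+ε) by positivity)
    linarith
  have hmR : (m:ℝ) ≤ ε * t / 8 := Nat.floor_le (by positivity)
  have hmR' : ε * t / 8 ≤ (m:ℝ) + 1 := le_of_lt (Nat.lt_floor_add_one _)
  have hbR : (b:ℝ) = (a:ℝ) + m := by rw [hbdef]; push_cast; ring
  have hbub : (b:ℝ) ≤ (t:ℝ)/2 + 5*ε*t/8 + 1 := by rw [hbR]; nlinarith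
  have hbt : b ≤ t := by
    have : (b:ℝ) ≤ t := by nlinarith
    exact_mod_cast this
  have hc1 : t ≤ 2*c := by omega
  have hc2 : 2*c ≤ t+1 := by omega
  have hca : c ≤ a := by
    have h2a : (t:ℝ) < 2*a := by nlinarith
    have : t < 2*a := by exact_mod_cast h2a
    omega
  have hcb : c ≤ b := le_trans hca (Nat.le_add_right _ _)
  have hcRhalf : (t:ℝ)/2 ≤ c := by
    have : (t:ℝ) ≤ 2*c := by exact_mod_cast hc1
    linarith
  have hbtR : (b:ℝ) ≤ t := by exact_mod_cast hbt
  have hDlb : (t:ℝ)/2 - 5*ε*t/8 ≤ (t:ℝ) - b + 1 := by linarith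
  have hD0 : (0:ℝ) < (t:ℝ)/2 - 5*ε*t/8 := by nlinarith
  have hDpos : (0:ℝ) < (t:ℝ) - b + 1 := lt_of_lt_of_le hD0 hDlb
  set B := b - c with hBdef
  have hBR : (B:ℝ) = (b:ℝ) - c := by
    rw [hBdef]; push_cast [Nat.cast_sub hcb]; ring
  have hBub : (B:ℝ) ≤ 5*ε*t/8 + 1 := by rw [hBR]; linarith
  have hBnn : (0:ℝ) ≤ (B:ℝ) := Nat.cast_nonneg _
  set E := (B:ℝ)*((B:ℝ)+1)/((t:ℝ)-b+1) with hEdef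
  have hEb : E ≤ 9/2*(ε^2*t) - 3 := by
    rw [hEdef, div_le_iff₀ hDpos]
    have h93 : (24:ℝ) ≤ 9/2*(ε^2*t) - 3 := by nlinarith
    have step1 : (B:ℝ)*((B:ℝ)+1) ≤ (5*ε*t/8 + 1)*(5*ε*t/8 + 2) := by nlinarith [hBub, hBnn]
    have step2 : (5*ε*t/8 + 1)*(5*ε*t/8 + 2) ≤ (9/2*(ε^2*t) - 3) * ((t:ℝ)/2 - 5*ε*t/8) := by
      have hint1 : (0:ℝ) ≤ (1/2 - ε) * (ε*t)^2 :=
        mul_nonneg (by linarith) (sq_nonneg _)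
      have hint2 : (0:ℝ) ≤ (ε^2*t - 6) * t := mul_nonneg (by linarith) htnn
      nlinarith [hint1, hint2, htR]
    calc (B:ℝ)*((B:ℝ)+1) ≤ (9/2*(ε^2*t) - 3) * ((t:ℝ)/2 - 5*ε*t/8) := le_trans step1 step2
      _ ≤ (9/2*(ε^2*t) - 3) * ((t:ℝ) - b + 1) := by
          apply mul_le_mul_of_nonneg_left hDlb; linarith
  set g : ℝ := 1/(4*Real.sqrt t) * Real.exp (-E) with hgdef
  have hst : (0:ℝ) < Real.sqrt t := Real.sqrt_pos.2 htpos
  have hgpos : 0 < g := by rw [hgdef]; positivity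
  -- per-term bound
  have hterm : ∀ k : ℕ, c ≤ k → k ≤ b → g ≤ (t.choose k : ℝ) / 2^t := by
    intro k hk1 hk2
    have hd := choose_ratio t c b hc1 hc2 hbt (k - c) (by omega)
    rw [show c + (k-c) = k by omega] at hd
    have hdB : ((k-c:ℕ):ℝ)*(((k-c:ℕ):ℝ)+1) ≤ (B:ℝ)*((B:ℝ)+1) := by
      have h1 : ((k-c:ℕ):ℝ) ≤ (B:ℝ) := by
        exact_mod_cast Nat.cast_le.2 (show k - c ≤ B by omega)
      nlinarith [Nat.cast_nonneg (α := ℝ) (k-c)]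
    have hmono : Real.exp (-E) ≤ Real.exp (-(((k-c:ℕ):ℝ)*(((k-c:ℕ):ℝ)+1)) / ((t:ℝ)-b+1)) := by
      apply Real.exp_le_exp.2
      rw [hEdef, neg_div]
      apply neg_le_neg
      gcongr
    have hcb2 : 1/(4*Real.sqrt t) ≤ (t.choose c : ℝ)/2^t := center_bound t (by omega)
    have h2t : (0:ℝ) < 2^t := by positivity
    calc g ≤ ((t.choose c:ℝ)/2^t) * Real.exp (-E) := by
          rw [hgdef]; apply mul_le_mul_of_nonneg_right hcb2 (Real.exp_pos _).le
      _ ≤ ((t.choose c:ℝ)/2^t) * Real.exp (-(((k-c:ℕ):ℝ)*(((k-c:ℕ):ℝ)+1)) / ((t:ℝ)-b+1)) := by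
          apply mul_le_mul_of_nonneg_left hmono (by positivity)
      _ = ((t.choose c:ℝ) * Real.exp (-(((k-c:ℕ):ℝ)*(((k-c:ℕ):ℝ)+1)) / ((t:ℝ)-b+1)))/2^t := by
          ring
      _ ≤ (t.choose k : ℝ) / 2^t := by gcongr
  -- probability mass of each point
  have hpx : ∀ x : Fin (t+1), (PMF.binomial (1/2) (by norm_num) t) x
      = ENNReal.ofReal ((t.choose (x:ℕ) : ℝ)/2^t) := by
    intro x
    rw [PMF.binomial_apply]
    have h12 : (1:ENNReal) - 1/2 = 1/2 := by norm_num
    have hxle : (x:ℕ) ≤ t := x.is_le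
    rw [show ((1/2 : NNReal) : ENNReal) = 1/2 by norm_num]
    rw [h12, Fin.val_last, ← pow_add, show (x:ℕ) + (t - (x:ℕ)) = t from by omega]
    rw [ENNReal.ofReal_div_of_pos (by positivity), ENNReal.ofReal_natCast]
    have h2p : ENNReal.ofReal ((2:ℝ)^t) = 2^t := by
      rw [ENNReal.ofReal_pow (by norm_num)]; norm_num
    rw [h2p, ENNReal.div_eq_inv_mul, mul_comm]
    congr 1
    simp [one_div, ← ENNReal.inv_pow]
  -- the event contains the interval [a, b]
  have hbfin : b < t + 1 := by omega
  have hafin : a < t + 1 := by omega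
  set lo : Fin (t+1) := ⟨a, hafin⟩ with hlo
  set hi : Fin (t+1) := ⟨b, hbfin⟩ with hhi
  set T : Finset (Fin (t+1)) := Finset.Icc lo hi with hT
  have hcard : T.card = m + 1 := by
    rw [hT, Fin.card_Icc]
    simp only [hlo, hhi]
    omega
  set S : Set (Fin (t+1)) := {i : Fin (t + 1) | ((i : ℕ) : ℝ) ≥ ((t:ℝ) / 2) * (1 + ε)} with hS
  have hmeas : MeasurableSet S := trivial
  have heach : ∀ x ∈ T, ENNReal.ofReal g ≤ S.indicator (PMF.binomial (1/2) (by norm_num) t) x := by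
    intro x hx
    rw [hT, Finset.mem_Icc] at hx
    have hx1 : a ≤ (x:ℕ) := hx.1
    have hx2 : (x:ℕ) ≤ b := hx.2
    have hxS : x ∈ S := by
      rw [hS]
      show ((x:ℕ):ℝ) ≥ ((t:ℝ)/2) * (1+ε)
      have : (a:ℝ) ≤ ((x:ℕ):ℝ) := by exact_mod_cast hx1
      linarith
    rw [Set.indicator_of_mem hxS, hpx x]
    exact ENNReal.ofReal_le_ofReal (hterm (x:ℕ) (le_trans hca hx1) hx2)
  -- final numeric inequality
  have hfinal : Real.exp (-(9 * ε ^ 2 * t) / 2) ≤ ((m:ℝ)+1) * g := by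
    have hs6 : Real.sqrt 6 ≤ ε * Real.sqrt t := by
      have h1 : Real.sqrt 6 ≤ Real.sqrt (ε^2*t) := Real.sqrt_le_sqrt h6
      rwa [show ε^2*(t:ℝ) = (ε*Real.sqrt t)^2 by
        rw [mul_pow, Real.sq_sqrt htpos.le], Real.sqrt_sq (by positivity)] at h1
    have h24 : (2.4:ℝ) ≤ Real.sqrt 6 := by
      rw [show (6:ℝ) = 2.4^2 + 0.24 by norm_num]
      calc (2.4:ℝ) = Real.sqrt (2.4^2) := by
            rw [Real.sqrt_sq]; norm_num
        _ ≤ _ := Real.sqrt_le_sqrt (by norm_num)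
    have hexp3 : (20:ℝ) < Real.exp 3 := by
      have h1 := Real.exp_one_gt_d9
      have h3 : Real.exp 3 = Real.exp 1 * Real.exp 1 * Real.exp 1 := by
        rw [← Real.exp_add, ← Real.exp_add]; norm_num
      nlinarith [Real.exp_pos 1]
    have he3 : Real.exp (-3) ≤ Real.sqrt 6 / 32 := by
      have hkey : (32:ℝ) ≤ Real.sqrt 6 * Real.exp 3 := by
        have := mul_le_mul h24 hexp3.le (by norm_num) (by positivity)
        linarith
      have hprod : Real.exp (-3) * Real.exp 3 = 1 := by rw [← Real.exp_add]; norm_num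
      have h32 : 32 * Real.exp (-3) ≤ Real.sqrt 6 := by
        have hh := mul_le_mul_of_nonneg_left hkey (Real.exp_pos (-3)).le
        nlinarith [hh, hprod]
      linarith
    have hmg : ε * Real.sqrt t / 32 ≤ ((m:ℝ)+1) / (4*Real.sqrt t) := by
      rw [div_le_div_iff₀ (by norm_num) (by positivity)]
      have hss : Real.sqrt t * Real.sqrt t = t := Real.mul_self_sqrt htpos.le
      nlinarith [hmR', hss]
    have hstep : Real.exp (-(9 * ε ^ 2 * t) / 2) ≤ Real.exp (-3) * Real.exp (-E) := by
      rw [← Real.exp_add]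
      apply Real.exp_le_exp.2
      linarith [hEb]
    calc Real.exp (-(9 * ε ^ 2 * t) / 2) ≤ Real.exp (-3) * Real.exp (-E) := hstep
      _ ≤ (Real.sqrt 6 / 32) * Real.exp (-E) := by
          apply mul_le_mul_of_nonneg_right he3 (Real.exp_pos _).le
      _ ≤ (ε * Real.sqrt t / 32) * Real.exp (-E) := by
          apply mul_le_mul_of_nonneg_right (by linarith) (Real.exp_pos _).le
      _ ≤ (((m:ℝ)+1) / (4*Real.sqrt t)) * Real.exp (-E) := by
          apply mul_le_mul_of_nonneg_right hmg (Real.exp_pos _).le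
      _ = ((m:ℝ)+1) * g := by rw [hgdef]; ring
  -- assemble
  rw [ge_iff_le, PMF.toMeasure_apply _ hmeas]
  calc ENNReal.ofReal (Real.exp (-(9 * ε ^ 2 * t) / 2))
      ≤ ENNReal.ofReal (((m:ℝ)+1) * g) := ENNReal.ofReal_le_ofReal hfinal
    _ = ((m+1:ℕ) : ENNReal) * ENNReal.ofReal g := by
        rw [show ((m:ℝ)+1) = ((m+1:ℕ):ℝ) by push_cast; ring,
          ENNReal.ofReal_mul (by positivity), ENNReal.ofReal_natCast]
    _ = T.card • ENNReal.ofReal g := by rw [hcard, nsmul_eq_mul]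
    _ ≤ ∑ x ∈ T, S.indicator (PMF.binomial (1/2) (by norm_num) t) x :=
        Finset.card_nsmul_le_sum T _ _ heach
    _ ≤ ∑' x, S.indicator (PMF.binomial (1/2) (by norm_num) t) x := ENNReal.sum_le_tsum T
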